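/- arXiv:1806.05515 — 3 statements merged into one kernel-verified Lean document; each statement's English description precedes it below -/
import Mathlib

section
/- Let p be an odd prime and let n and k be odd positive integers with k ≡ p − 2 (mod p−1). Then Ê_n^{(−k)} ≡ 0 (mod p). -/
/-- Stirling numbers of the second kind (as rationals),
`S(n,j) = (1/j!) ∑_{i=0}^{j} (-1)^{j-i} C(j,i) i^n`. -/
def stirling2 (n j : ℕ) : ℚ :=
  (1 / j.factorial) *
    ∑ i ∈ Finset.range (j + 1), (-1) ^ (j - i) * (j.choose i : ℚ) * (i : ℚ) ^ n

/-- Poly-Euler numbers of the second kind with negative index `-k`: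
`Ê_n^{(-k)} = ((-1)^k/2) ∑_{l=0}^{k} (-1)^l l! S(k,l) ((4l+3)^n + (4l+1)^n)`. -/
def polyEulerSecondNeg (n k : ℕ) : ℚ :=
  ((-1) ^ k / 2) *
    ∑ l ∈ Finset.range (k + 1),
      (-1) ^ l * (l.factorial : ℚ) * stirling2 k l *
        ((4 * (l : ℚ) + 3) ^ n + (4 * (l : ℚ) + 1) ^ n)

/-! ### Auxiliary integer quantities -/

/-- `(4l+3)^n + (4l+1)^n` as an integer. -/
def polyA (n l : ℕ) : ℤ := (4 * (l : ℤ) + 3) ^ n + (4 * (l : ℤ) + 1) ^ n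

/-- `l! S(k,l)` as an integer. -/
def polyC (k l : ℕ) : ℤ :=
  ∑ i ∈ Finset.range (l + 1), (-1) ^ (l - i) * (l.choose i : ℤ) * (i : ℤ) ^ k

/-- `2 (-1)^k Ê_n^{(-k)}` as an integer. -/
def polyS (n k : ℕ) : ℤ :=
  ∑ l ∈ Finset.range (k + 1), (-1) ^ l * polyC k l * polyA n l

/-- Partial harmonic sums in `ZMod p`. -/
def Hp (p l : ℕ) : ZMod p := ∑ j ∈ Finset.range l, ((j : ZMod p) + 1)⁻¹

/-! ### Auxiliary lemmas -/

lemma alt_sum_choose_pow_eq_zero : ∀ (m l : ℕ), m < l →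
    ∑ i ∈ Finset.range (l + 1), (-1 : ℤ) ^ i * (l.choose i : ℤ) * (i : ℤ) ^ m = 0 := by
  intro m
  induction m using Nat.strong_induction_on with
  | _ m ih =>
    intro l hml
    match m, l, hml with
    | 0, l, hml =>
      have := Int.alternating_sum_range_choose_of_ne (n := l) (by omega)
      rw [← this]
      exact Finset.sum_congr rfl (fun i _ => by ring)
    | m + 1, l + 1, hml =>
      rw [Finset.sum_range_succ']
      simp only [Nat.cast_zero, zero_pow (Nat.succ_ne_zero m), mul_zero, add_zero]
      have hterm : ∀ j, (-1 : ℤ) ^ (j+1) * ((l+1).choose (j+1) : ℤ) * ((j+1 : ℕ) : ℤ) ^ (m+1)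
          = -((l:ℤ)+1) * ((-1 : ℤ)^j * (l.choose j : ℤ) * ((j : ℤ)+1) ^ m) := by
        intro j
        have hc : ((l:ℤ)+1) * (l.choose j : ℤ) = ((l+1).choose (j+1) : ℤ) * ((j:ℤ)+1) := by
          exact_mod_cast congrArg (Nat.cast : ℕ → ℤ) (Nat.add_one_mul_choose_eq l j)
        push_cast
        linear_combination ((-1:ℤ)^j * ((j:ℤ)+1)^m) * hc
      simp only [hterm]
      rw [← Finset.mul_sum]
      have hexp : ∀ j : ℕ, ((j:ℤ)+1)^m = ∑ t ∈ Finset.range (m+1),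
          (j:ℤ)^t * 1^(m-t) * (m.choose t : ℤ) :=
        fun j => add_pow (j:ℤ) 1 m
      have : ∑ j ∈ Finset.range (l + 1), (-1 : ℤ)^j * (l.choose j : ℤ) * ((j : ℤ)+1) ^ m = 0 := by
        calc ∑ j ∈ Finset.range (l + 1), (-1 : ℤ)^j * (l.choose j : ℤ) * ((j : ℤ)+1) ^ m
            = ∑ j ∈ Finset.range (l + 1), ∑ t ∈ Finset.range (m+1),
                (m.choose t : ℤ) * ((-1 : ℤ)^j * (l.choose j : ℤ) * (j:ℤ)^t) := by
              refine Finset.sum_congr rfl fun j _ => ?_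
              rw [hexp j, Finset.mul_sum]
              exact Finset.sum_congr rfl fun t _ => by ring
          _ = ∑ t ∈ Finset.range (m+1), (m.choose t : ℤ) *
                ∑ j ∈ Finset.range (l + 1), (-1 : ℤ)^j * (l.choose j : ℤ) * (j:ℤ)^t := by
              rw [Finset.sum_comm]
              exact Finset.sum_congr rfl fun t _ => by rw [Finset.mul_sum]
          _ = 0 := by
              refine Finset.sum_eq_zero fun t ht => ?_
              rw [ih t (by simp at ht; omega) l (by simp at ht; omega), mul_zero]
      rw [this, mul_zero]

lemma zmod_ncast_ne_zero (p : ℕ) [Fact p.Prime] {i : ℕ} (h1 : 1 ≤ i) (h2 : i ≤ p - 1) :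
    ((i : ℕ) : ZMod p) ≠ 0 := by
  rw [Ne, ZMod.natCast_eq_zero_iff]
  have hp := (Fact.out : p.Prime).two_le
  intro hdvd
  have := Nat.le_of_dvd (by omega) hdvd
  omega

lemma zmod_pow_sub_two (p : ℕ) [Fact p.Prime] (hp3 : 3 ≤ p) (x : ZMod p) :
    x ^ (p - 2) = x⁻¹ := by
  rcases eq_or_ne x 0 with h | h
  · rw [h, inv_zero, zero_pow (by omega)]
  · have h1 : x ^ (p - 1) = 1 := ZMod.pow_card_sub_one_eq_one h
    have h2 : p - 2 + 1 = p - 1 := by omega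
    refine eq_inv_of_mul_eq_one_left ?_
    rw [← pow_succ, h2, h1]

lemma zmod_alt_choose_sum (p : ℕ) [Fact p.Prime] (m : ℕ) (hm : m ≠ 0) :
    ∑ j ∈ Finset.range (m + 1), ((-1 : ZMod p) ^ j * (m.choose j : ZMod p)) = 0 := by
  have h := add_pow (-1 : ZMod p) 1 m
  simp only [one_pow, mul_one, neg_add_cancel] at h
  rw [zero_pow hm] at h
  exact h.symm

lemma alt_choose_inv_sum (p : ℕ) [Fact p.Prime] (hp3 : 3 ≤ p) :
    ∀ l, l ≤ p - 2 →
      ∑ i ∈ Finset.range (l + 1), (-1 : ZMod p) ^ i * (l.choose i : ZMod p) * (i : ZMod p)⁻¹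
        = - Hp p l := by
  intro l
  induction l with
  | zero => simp [Hp]
  | succ l ih =>
    intro hl
    have hIH := ih (by omega)
    rw [Finset.sum_range_succ']
    simp only [Nat.cast_zero, inv_zero, mul_zero, add_zero]
    have hsplit : ∀ j : ℕ,
        (-1 : ZMod p) ^ (j+1) * ((l+1).choose (j+1) : ZMod p) * ((j+1 : ℕ) : ZMod p)⁻¹
        = (-1 : ZMod p) ^ (j+1) * (l.choose (j+1) : ZMod p) * ((j+1 : ℕ) : ZMod p)⁻¹
          + (-1 : ZMod p) ^ (j+1) * (l.choose j : ZMod p) * ((j+1 : ℕ) : ZMod p)⁻¹ := by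
      intro j
      rw [Nat.choose_succ_succ']
      push_cast
      ring
    simp only [hsplit]
    rw [Finset.sum_add_distrib]
    have hA : ∑ j ∈ Finset.range (l + 1),
        (-1 : ZMod p) ^ (j+1) * (l.choose (j+1) : ZMod p) * ((j+1 : ℕ) : ZMod p)⁻¹
        = - Hp p l := by
      rw [Finset.sum_range_succ, Nat.choose_succ_self, Nat.cast_zero, mul_zero, zero_mul,
        add_zero]
      rw [Finset.sum_range_succ'] at hIH
      simpa using hIH
    have hB : ∑ j ∈ Finset.range (l + 1),
        (-1 : ZMod p) ^ (j+1) * (l.choose j : ZMod p) * ((j+1 : ℕ) : ZMod p)⁻¹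
        = - ((l + 1 : ℕ) : ZMod p)⁻¹ := by
      have hb : ((l + 1 : ℕ) : ZMod p) ≠ 0 := zmod_ncast_ne_zero p (by omega) (by omega)
      have hterm : ∀ j ∈ Finset.range (l + 1),
          (-1 : ZMod p) ^ (j+1) * (l.choose j : ZMod p) * ((j+1 : ℕ) : ZMod p)⁻¹
          = ((l + 1 : ℕ) : ZMod p)⁻¹ * ((-1 : ZMod p) ^ (j+1) * ((l+1).choose (j+1) : ZMod p)) := by
        intro j hj
        simp only [Finset.mem_range] at hj
        have ha : ((j + 1 : ℕ) : ZMod p) ≠ 0 := zmod_ncast_ne_zero p (by omega) (by omega)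
        have hc : ((l + 1 : ℕ) : ZMod p) * (l.choose j : ZMod p)
            = ((l+1).choose (j+1) : ZMod p) * ((j + 1 : ℕ) : ZMod p) := by
          exact_mod_cast congrArg (Nat.cast : ℕ → ZMod p) (Nat.add_one_mul_choose_eq l j)
        have key : (l.choose j : ZMod p) * ((j + 1 : ℕ) : ZMod p)⁻¹
            = ((l + 1 : ℕ) : ZMod p)⁻¹ * ((l+1).choose (j+1) : ZMod p) := by
          rw [← div_eq_mul_inv, mul_comm (((l + 1 : ℕ) : ZMod p))⁻¹, ← div_eq_mul_inv,
            div_eq_div_iff ha hb]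
          linear_combination hc
        rw [mul_assoc, key]
        ring
      rw [Finset.sum_congr rfl hterm, ← Finset.mul_sum]
      have halt := zmod_alt_choose_sum p (l+1) (by omega)
      rw [Finset.sum_range_succ'] at halt
      simp only [pow_zero, Nat.choose_zero_right, Nat.cast_one, one_mul] at halt
      have hsum : ∑ j ∈ Finset.range (l + 1),
          ((-1 : ZMod p) ^ (j+1) * ((l+1).choose (j+1) : ZMod p)) = -1 := by
        linear_combination halt
      rw [hsum]
      ring
    have hstep : Hp p (l+1) = Hp p l + ((l : ZMod p) + 1)⁻¹ := Finset.sum_range_succ _ _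
    rw [hA, hB, hstep]
    push_cast
    ring

lemma zmod_cast_sub_cast (p : ℕ) {a : ℕ} (ha : a ≤ p) : ((p - a : ℕ) : ZMod p) = -(a : ZMod p) := by
  have h : (p - a) + a = p := by omega
  have := congrArg (Nat.cast : ℕ → ZMod p) h
  push_cast at this
  rw [ZMod.natCast_self] at this
  linear_combination this

lemma Hp_last (p : ℕ) [Fact p.Prime] (hp3 : 3 ≤ p) : Hp p (p - 1) = 0 := by
  have h2 : ((2 : ℕ) : ZMod p) ≠ 0 := zmod_ncast_ne_zero p (by omega) (by omega)
  have hrefl := Finset.sum_range_reflect (fun j => ((j : ZMod p) + 1)⁻¹) (p - 1)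
  have hneg : ∑ j ∈ Finset.range (p - 1), (((p - 1 - 1 - j : ℕ) : ZMod p) + 1)⁻¹
      = - Hp p (p - 1) := by
    rw [Hp, ← Finset.sum_neg_distrib]
    refine Finset.sum_congr rfl fun j hj => ?_
    simp only [Finset.mem_range] at hj
    have hc : ((p - 1 - 1 - j : ℕ) : ZMod p) = -((j + 2 : ℕ) : ZMod p) := by
      have h : p - 1 - 1 - j = p - (j + 2) := by omega
      rw [h, zmod_cast_sub_cast p (by omega)]
    rw [hc]
    have h3 : -(((j + 2 : ℕ) : ZMod p)) + 1 = -((j : ZMod p) + 1) := by push_cast; ring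
    rw [h3, inv_neg]
  rw [hneg] at hrefl
  have hH : (∑ j ∈ Finset.range (p - 1), ((j : ZMod p) + 1)⁻¹) = Hp p (p - 1) := rfl
  rw [hH] at hrefl
  have hz : ((2 : ℕ) : ZMod p) * Hp p (p - 1) = 0 := by
    push_cast
    linear_combination -hrefl
  rcases mul_eq_zero.mp hz with h | h
  · exact absurd h h2
  · exact h

lemma Hp_reflect (p : ℕ) [Fact p.Prime] (hp3 : 3 ≤ p) {l : ℕ} (hl : l ≤ p - 1) :
    Hp p (p - 1 - l) = Hp p l := by
  have h0 := Hp_last p hp3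
  have hsplit : Hp p (p - 1) = Hp p (p - 1 - l)
      + ∑ j ∈ Finset.range l, (((p - 1 - l + j : ℕ) : ZMod p) + 1)⁻¹ := by
    rw [Hp, Hp]
    have h : p - 1 = (p - 1 - l) + l := by omega
    rw [h, Finset.sum_range_add]
    norm_num
  have hrest : ∑ j ∈ Finset.range l, (((p - 1 - l + j : ℕ) : ZMod p) + 1)⁻¹ = - Hp p l := by
    have hrefl := Finset.sum_range_reflect
      (fun j => (((p - 1 - l + j : ℕ) : ZMod p) + 1)⁻¹) l
    rw [← hrefl, Hp, ← Finset.sum_neg_distrib]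
    refine Finset.sum_congr rfl fun j hj => ?_
    simp only [Finset.mem_range] at hj
    have h : p - 1 - l + (l - 1 - j) = p - (j + 2) := by omega
    rw [h, zmod_cast_sub_cast p (by omega)]
    have h3 : -(((j + 2 : ℕ) : ZMod p)) + 1 = -((j : ZMod p) + 1) := by push_cast; ring
    rw [h3, inv_neg]
  rw [hsplit, hrest] at h0
  linear_combination h0

lemma polyEuler_eq_polyS (n k : ℕ) :
    polyEulerSecondNeg n k = ((-1) ^ k / 2) * ((polyS n k : ℤ) : ℚ) := by
  rw [polyEulerSecondNeg]
  congr 1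
  simp only [polyS, polyC, polyA]
  push_cast
  refine Finset.sum_congr rfl fun l _ => ?_
  have h : (l.factorial : ℚ) ≠ 0 := Nat.cast_ne_zero.mpr (Nat.factorial_ne_zero l)
  simp only [stirling2]
  field_simp

lemma two_dvd_polyS (n k : ℕ) (hn : 0 < n) : (2 : ℤ) ∣ polyS n k := by
  have h : ((polyS n k : ℤ) : ZMod 2) = 0 := by
    simp only [polyS, polyA]
    push_cast
    apply Finset.sum_eq_zero
    intro l _
    have h3 : (4 * (l : ZMod 2) + 3) = 1 := by
      have : ∀ x : ZMod 2, 4 * x + 3 = 1 := by decide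
      exact this _
    have h1 : (4 * (l : ZMod 2) + 1) = 1 := by
      have : ∀ x : ZMod 2, 4 * x + 1 = 1 := by decide
      exact this _
    rw [h3, h1, one_pow]
    have : (1 + 1 : ZMod 2) = 0 := by decide
    rw [this, mul_zero]
  have := (ZMod.intCast_zmod_eq_zero_iff_dvd (polyS n k) 2).mp h
  exact_mod_cast this

theorem polyEulerSecondNeg_congr_zero (p : ℕ) (hp : Nat.Prime p) (hpodd : Odd p)
    (n k : ℕ) (hn : Odd n) (hk : Odd k) (hnpos : 0 < n) (hkpos : 0 < k)
    (hcong : k ≡ p - 2 [MOD p - 1]) :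
    ∃ z : ℤ, polyEulerSecondNeg n k = (p : ℚ) * (z : ℚ) := by
  haveI : Fact p.Prime := ⟨hp⟩
  have hp2 := hp.two_le
  have hp3 : 3 ≤ p := by
    rcases hpodd with ⟨m, hm⟩
    omega
  have hk2 : k % (p - 1) = p - 2 := by
    have : (p - 2) % (p - 1) = p - 2 := Nat.mod_eq_of_lt (by omega)
    rw [Nat.ModEq] at hcong
    omega
  have hkge : p - 2 ≤ k := by
    have := Nat.mod_le k (p - 1)
    omega
  -- Fermat: x^k = x^(p-2) in ZMod p
  have hpowk : ∀ x : ZMod p, x ^ k = x ^ (p - 2) := by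
    intro x
    have hq : k = (p - 1) * (k / (p - 1)) + (p - 2) := by
      have := Nat.div_add_mod k (p - 1)
      omega
    rcases eq_or_ne x 0 with h | h
    · rw [h, zero_pow (by omega), zero_pow (by omega)]
    · rw [hq, pow_add, pow_mul, ZMod.pow_card_sub_one_eq_one h, one_pow, one_mul]
  -- p divides polyS
  have hpdvd : (p : ℤ) ∣ polyS n k := by
    rw [← ZMod.intCast_zmod_eq_zero_iff_dvd]
    -- notation
    set F : ℕ → ZMod p := fun l => (4 * (l : ZMod p) + 3) ^ n + (4 * (l : ZMod p) + 1) ^ n with hFdef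
    set D : ℕ → ZMod p :=
      fun l => ∑ i ∈ Finset.range (l + 1),
        (-1 : ZMod p) ^ i * (l.choose i : ZMod p) * (i : ZMod p)⁻¹ with hDdef
    have hsign : ∀ i l : ℕ, i ≤ l → (-1 : ZMod p) ^ l * (-1 : ZMod p) ^ (l - i) = (-1) ^ i := by
      intro i l hil
      rw [← pow_add]
      have h : l + (l - i) = 2 * (l - i) + i := by omega
      rw [h, pow_add, pow_mul, neg_one_sq, one_pow, one_mul]
    have hcast : ((polyS n k : ℤ) : ZMod p) = ∑ l ∈ Finset.range (k + 1), D l * F l := by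
      simp only [polyS, polyC, polyA]
      push_cast
      refine Finset.sum_congr rfl fun l _ => ?_
      have hC : (-1 : ZMod p) ^ l * (∑ i ∈ Finset.range (l + 1),
          (-1 : ZMod p) ^ (l - i) * (l.choose i : ZMod p) * (i : ZMod p) ^ k) = D l := by
        rw [Finset.mul_sum, hDdef]
        refine Finset.sum_congr rfl fun i hi => ?_
        simp only [Finset.mem_range] at hi
        rw [hpowk, zmod_pow_sub_two p hp3, ← mul_assoc, ← mul_assoc, hsign i l (by omega)]
      rw [← hC, hFdef]
    rw [hcast]
    have hDbig : ∀ l : ℕ, p - 1 ≤ l → D l = 0 := by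
      intro l hl
      have hz := congrArg (Int.cast : ℤ → ZMod p)
        (alt_sum_choose_pow_eq_zero (p - 2) l (by omega))
      push_cast at hz
      rw [hDdef]
      rw [← hz]
      refine Finset.sum_congr rfl fun i _ => ?_
      rw [zmod_pow_sub_two p hp3]
    have hDsmall : ∀ l : ℕ, l ≤ p - 2 → D l = - Hp p l := fun l hl =>
      alt_choose_inv_sum p hp3 l hl
    have htrunc : ∑ l ∈ Finset.range (k + 1), D l * F l
        = ∑ l ∈ Finset.range (p - 1), D l * F l := by
      refine (Finset.sum_subset (Finset.range_subset_range.mpr (by omega)) ?_).symm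
      intro x _ hx
      simp only [Finset.mem_range] at hx
      rw [hDbig x (by omega), zero_mul]
    rw [htrunc]
    have hsmall : ∑ l ∈ Finset.range (p - 1), D l * F l
        = - ∑ l ∈ Finset.range (p - 1), Hp p l * F l := by
      rw [← Finset.sum_neg_distrib]
      refine Finset.sum_congr rfl fun l hl => ?_
      simp only [Finset.mem_range] at hl
      rw [hDsmall l (by omega)]
      ring
    rw [hsmall]
    -- extend the sum to range p
    have hext : ∑ l ∈ Finset.range p, Hp p l * F l
        = ∑ l ∈ Finset.range (p - 1), Hp p l * F l := by
      have hrange : Finset.range p = Finset.range ((p - 1) + 1) := by congr 1; omega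
      rw [hrange, Finset.sum_range_succ, Hp_last p hp3, zero_mul, add_zero]
    rw [← hext]
    -- reflection: T = -T
    have hFrefl : ∀ l : ℕ, l < p → F (p - 1 - l) = - F l := by
      intro l hl
      have hc : ((p - 1 - l : ℕ) : ZMod p) = -(((l + 1 : ℕ) : ZMod p)) := by
        have h : p - 1 - l = p - (l + 1) := by omega
        rw [h, zmod_cast_sub_cast p (by omega)]
      show (4 * ((p - 1 - l : ℕ) : ZMod p) + 3) ^ n + (4 * ((p - 1 - l : ℕ) : ZMod p) + 1) ^ n
        = -((4 * ((l : ℕ) : ZMod p) + 3) ^ n + (4 * ((l : ℕ) : ZMod p) + 1) ^ n)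
      rw [hc]
      have h1 : (4 : ZMod p) * (-(((l + 1 : ℕ) : ZMod p))) + 3 = -(4 * (l : ZMod p) + 1) := by
        push_cast; ring
      have h2 : (4 : ZMod p) * (-(((l + 1 : ℕ) : ZMod p))) + 1 = -(4 * (l : ZMod p) + 3) := by
        push_cast; ring
      rw [h1, h2, hn.neg_pow, hn.neg_pow]
      ring
    have hrefl := Finset.sum_range_reflect (fun l => Hp p l * F l) p
    have hTneg : ∑ l ∈ Finset.range p, Hp p l * F l
        = - ∑ l ∈ Finset.range p, Hp p l * F l := by
      conv_lhs => rw [← hrefl]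
      rw [← Finset.sum_neg_distrib]
      refine Finset.sum_congr rfl fun l hl => ?_
      simp only [Finset.mem_range] at hl
      rw [Hp_reflect p hp3 (by omega), hFrefl l hl]
      ring
    have h2 : ((2 : ℕ) : ZMod p) ≠ 0 := zmod_ncast_ne_zero p (by omega) (by omega)
    have hz : ((2 : ℕ) : ZMod p) * ∑ l ∈ Finset.range p, Hp p l * F l = 0 := by
      push_cast
      linear_combination hTneg
    rcases mul_eq_zero.mp hz with h | h
    · exact absurd h h2
    · rw [h, neg_zero]
  -- combine 2 ∣ S and p ∣ S
  obtain ⟨t, ht⟩ := two_dvd_polyS n k hnpos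
  have hpt : (p : ℤ) ∣ t := by
    have hprime : Prime (p : ℤ) := Nat.prime_iff_prime_int.mp hp
    rcases (hprime.dvd_mul.mp (ht ▸ hpdvd)) with h | h
    · exfalso
      have := Int.le_of_dvd (by norm_num) h
      have : p ≤ 2 := by exact_mod_cast this
      omega
    · exact h
  obtain ⟨z, hz⟩ := hpt
  refine ⟨(-1) ^ k * z, ?_⟩
  rw [polyEuler_eq_polyS, ht, hz]
  push_cast
  ring
end

section
/- For all integers N ≥ 0 and n ≥ 1, Ê_{N,2n} = (−1)ⁿ · (2n)! · det M, where M is the n×n matrix whose (i,j) entry (1 ≤ i, j ≤ n) is (2N+1)!/(2N+2(i−j)+3)! if j ≤ i, 1 if j = i+1, and 0 if j > i+1. (Its first column is (2N+1)!/(2N+3)!, (2N+1)!/(2N+5)!, …, (2N+1)!/(2N+2n+1)!.) -/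
open Matrix in

theorem hypergeomEulerSecond_det (N : ℕ) (E : ℕ → ℕ → ℚ)
    (hE0 : ∀ M : ℕ, E M 0 = 1)
    (hEodd : ∀ M m : ℕ, E M (2 * m + 1) = 0)
    (hErec : ∀ M m : ℕ, 1 ≤ m →
      E M (2 * m) =
        -((2 * m).factorial : ℚ) * ((2 * M + 1).factorial : ℚ) *
          ∑ i ∈ Finset.range m,
            E M (2 * i) /
              (((2 * M + 2 * m - 2 * i + 1).factorial : ℚ) * ((2 * i).factorial : ℚ)))
    (n : ℕ) (hn : 1 ≤ n) :
    E N (2 * n) =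
      (-1) ^ n * ((2 * n).factorial : ℚ) *
        Matrix.det (Matrix.of fun i j : Fin n =>
          if (j : ℕ) ≤ (i : ℕ) then
            ((2 * N + 1).factorial : ℚ) / ((2 * N + 2 * ((i : ℕ) - (j : ℕ)) + 3).factorial : ℚ)
          else if (j : ℕ) = (i : ℕ) + 1 then 1 else 0) := by
  obtain ⟨m, rfl⟩ : ∃ m, n = m + 1 := ⟨n - 1, by omega⟩
  clear hn
  set f : ℕ → ℚ := fun k => ((2*N+1).factorial : ℚ) / ((2*N+2*k+3).factorial : ℚ) with hf
  set x : ℕ → ℚ := fun k => E N (2*k) / ((2*k).factorial : ℚ) with hx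
  have hfac : ∀ k : ℕ, ((k.factorial : ℚ)) ≠ 0 := fun k => Nat.cast_ne_zero.2 k.factorial_ne_zero
  have hfv : ∀ k, f k = ((2*N+1).factorial : ℚ) / ((2*N+2*k+3).factorial : ℚ) := fun k => rfl
  have hxv : ∀ k, x k = E N (2*k) / ((2*k).factorial : ℚ) := fun k => rfl
  have hx0 : x 0 = 1 := by simp [hx, hE0]
  have key : ∀ i : ℕ, ∑ j ∈ Finset.range (i+1), f (i - j) * x j = -x (i+1) := by
    intro i
    have h := hErec N (i+1) (by omega)
    have h2 : ∀ k ∈ Finset.range (i+1),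
        ((2*N+1).factorial : ℚ) *
          (E N (2*k) / (((2*N+2*(i+1)-2*k+1).factorial : ℚ) * ((2*k).factorial : ℚ)))
          = f (i-k) * x k := by
      intro k hk
      rw [Finset.mem_range] at hk
      have e1 : 2*N+2*(i+1)-2*k+1 = 2*N+2*(i-k)+3 := by omega
      rw [e1, hfv, hxv]
      rw [div_mul_div_comm]
      ring
    have hxs : x (i+1) = -∑ k ∈ Finset.range (i+1),
        ((2*N+1).factorial : ℚ) *
          (E N (2*k) / (((2*N+2*(i+1)-2*k+1).factorial : ℚ) * ((2*k).factorial : ℚ))) := by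
      rw [hxv, h, ← Finset.mul_sum]
      field_simp
    rw [Finset.sum_congr rfl h2] at hxs
    linarith [hxs]
  set A : Matrix (Fin (m+1)) (Fin (m+1)) ℚ := Matrix.of fun i j : Fin (m+1) =>
          if (j : ℕ) ≤ (i : ℕ) then
            ((2 * N + 1).factorial : ℚ) / ((2 * N + 2 * ((i : ℕ) - (j : ℕ)) + 3).factorial : ℚ)
          else if (j : ℕ) = (i : ℕ) + 1 then 1 else 0 with hA
  have hAapp : ∀ i j : Fin (m+1), A i j =
      if (j : ℕ) ≤ (i : ℕ) then f ((i : ℕ) - (j : ℕ))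
      else if (j : ℕ) = (i : ℕ) + 1 then 1 else 0 := by
    intro i j; rw [hA]; rfl
  set vecx : Fin (m+1) → ℚ := fun i => x i with hvecx
  set b : Fin (m+1) → ℚ := Pi.single (Fin.last m) (-(x (m+1))) with hb
  have step1 : A *ᵥ vecx = b := by
    funext i
    have hsplit : ∀ j : Fin (m+1), A i j * vecx j =
        (if (j:ℕ) ≤ (i:ℕ) then f ((i:ℕ)-(j:ℕ)) * x (j:ℕ) else 0) +
        (if (j:ℕ) = (i:ℕ)+1 then x (j:ℕ) else 0) := by
      intro j
      rw [hAapp]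
      by_cases h1 : (j:ℕ) ≤ (i:ℕ)
      · rw [if_pos h1, if_pos h1, if_neg (by omega), add_zero]
      · rw [if_neg h1, if_neg h1, zero_add]
        by_cases h2 : (j:ℕ) = (i:ℕ)+1
        · rw [if_pos h2, if_pos h2, one_mul]
        · rw [if_neg h2, if_neg h2, zero_mul]
    have hmv : (A *ᵥ vecx) i = ∑ j : Fin (m+1), A i j * vecx j := by
      simp [Matrix.mulVec, dotProduct]
    rw [hmv, Finset.sum_congr rfl (fun j _ => hsplit j), Finset.sum_add_distrib]
    have hS1 : (∑ j : Fin (m+1), if (j:ℕ) ≤ (i:ℕ) then f ((i:ℕ)-(j:ℕ)) * x (j:ℕ) else 0)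
        = -x ((i:ℕ)+1) := by
      rw [Fin.sum_univ_eq_sum_range (fun j => if j ≤ (i:ℕ) then f ((i:ℕ)-j) * x j else 0)]
      rw [← Finset.sum_subset (Finset.range_subset_range.2 (by omega : (i:ℕ)+1 ≤ m+1))
        (fun j _ hj => by rw [if_neg (by simp at hj ⊢; omega)])]
      rw [Finset.sum_congr rfl (fun j hj => if_pos (by simp at hj; omega)), key]
    have hS2 : (∑ j : Fin (m+1), if (j:ℕ) = (i:ℕ)+1 then x (j:ℕ) else 0)
        = if (i:ℕ)+1 ∈ Finset.range (m+1) then x ((i:ℕ)+1) else 0 := by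
      rw [Fin.sum_univ_eq_sum_range (fun j => if j = (i:ℕ)+1 then x j else 0)]
      exact Finset.sum_ite_eq' (Finset.range (m+1)) ((i:ℕ)+1) (fun j => x j)
    rw [hS1, hS2, hb]
    by_cases hi : i = Fin.last m
    · subst hi
      rw [if_neg (by simp), Pi.single_apply, if_pos rfl]
      simp [Fin.val_last]
    · rw [if_pos (by simp only [Finset.mem_range]; have := Fin.val_lt_last hi; omega),
        Pi.single_apply, if_neg hi]
      ring
  have step2 : A.det • vecx = Matrix.cramer A b := by
    rw [Matrix.cramer_eq_adjugate_mulVec, ← step1, Matrix.mulVec_mulVec, Matrix.adjugate_mul,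
      Matrix.smul_mulVec, Matrix.one_mulVec]
  have step2' : A.det = (A.updateCol 0 b).det := by
    have := congrFun step2 0
    rw [Matrix.cramer_apply] at this
    simpa [hvecx, hx0] using this
  -- compute det of updated matrix
  have hbsmul : b = (-(x (m+1))) • (Pi.single (Fin.last m) 1 : Fin (m+1) → ℚ) := by
    funext j
    rw [hb, Pi.smul_apply, Pi.single_apply, Pi.single_apply]
    by_cases hj : j = Fin.last m <;> simp [hj]
  have hsub : ∀ i j : Fin m,
      ((A.updateCol 0 (Pi.single (Fin.last m) 1)).submatrix (Fin.last m).succAbove Fin.succ) i j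
        = A i.castSucc j.succ := by
    intro i j
    rw [Matrix.submatrix_apply, Fin.succAbove_last, Matrix.updateCol_ne (Fin.succ_ne_zero j)]
  have hlow : ((A.updateCol 0 (Pi.single (Fin.last m) 1)).submatrix
      (Fin.last m).succAbove Fin.succ).det = 1 := by
    rw [Matrix.det_of_lowerTriangular _ ?htri]
    · rw [Finset.prod_congr rfl (fun i _ => by
        rw [hsub, hAapp, if_neg (by simp), if_pos (by simp)])]
      simp
    case htri =>
      intro i j hij
      have hij' : (i:ℕ) < (j:ℕ) := hij
      rw [hsub, hAapp, if_neg (by simp; omega), if_neg (by simp; omega)]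
  have step3 : (A.updateCol 0 b).det = (-(x (m+1))) * (-1)^m := by
    rw [hbsmul, Matrix.det_updateCol_smul]
    congr 1
    rw [Matrix.det_succ_column_zero]
    rw [Finset.sum_eq_single (Fin.last m)]
    · rw [Matrix.updateCol_self, Pi.single_eq_same, hlow, Fin.val_last]
      ring
    · intro i _ hi
      rw [Matrix.updateCol_self, Pi.single_eq_of_ne hi]
      ring
    · intro h; exact absurd (Finset.mem_univ _) h
  have hdet : A.det = (-1)^(m+1) * x (m+1) := by
    rw [step2', step3]; ring
  rw [hdet]
  have hsq : ((-1:ℚ))^(m+1) * ((-1:ℚ))^(m+1) = 1 := by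
    rw [← pow_add, ← two_mul, pow_mul, neg_one_sq, one_pow]
  have hre : (-1:ℚ)^(m+1) * ((2*(m+1)).factorial : ℚ) * ((-1:ℚ)^(m+1) * x (m+1))
       = ((-1:ℚ)^(m+1) * (-1:ℚ)^(m+1)) * (((2*(m+1)).factorial : ℚ) * x (m+1)) := by ring
  rw [hre, hsq, one_mul, hxv]
  field_simp
end

section
/- For all integers N ≥ 0 and n ≥ 1, E_{N,2n} = (−1)ⁿ · (2n)! · det M, where M is the n×n matrix whose (i,j) entry (1 ≤ i, j ≤ n) is (2N)!/(2N+2(i−j)+2)! if j ≤ i, 1 if j = i+1, and 0 if j > i+1. (Its first column is (2N)!/(2N+2)!, (2N)!/(2N+4)!, …, (2N)!/(2N+2n)!.) -/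
noncomputable def hgC (N k : ℕ) : ℚ :=
  ((2 * N).factorial : ℚ) / ((2 * N + 2 * k + 2).factorial : ℚ)

noncomputable def hgG (N s k : ℕ) : Matrix (Fin k) (Fin k) ℚ :=
  Matrix.of fun i j =>
    if (j : ℕ) ≤ (i : ℕ) then hgC N ((i : ℕ) - (j : ℕ) + if (j : ℕ) = 0 then s else 0)
    else if (j : ℕ) = (i : ℕ) + 1 then 1 else 0

lemma hgG_det_one (N s : ℕ) : (hgG N s 1).det = hgC N s := by
  rw [Matrix.det_fin_one]
  simp [hgG]

lemma hgG_det_succ (N s n : ℕ) :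
    (hgG N s (n + 2)).det = hgC N s * (hgG N 0 (n + 1)).det - (hgG N (s + 1) (n + 1)).det := by
  rw [Matrix.det_succ_row_zero, Fin.sum_univ_succ, Fin.sum_univ_succ]
  have h0 : hgG N s (n + 2) 0 0 = hgC N s := by simp [hgG]
  have h1 : hgG N s (n + 2) 0 ((0 : Fin (n+1)).succ) = 1 := by
    simp [hgG]
  have hrest : ∀ j : Fin n, hgG N s (n + 2) 0 (j.succ.succ) = 0 := by
    intro j
    simp only [hgG, Matrix.of_apply, Fin.val_succ, Fin.val_zero]
    split_ifs <;> first | rfl | omega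
  have hsub0 : (hgG N s (n + 2)).submatrix Fin.succ ((0 : Fin (n + 2)).succAbove)
      = hgG N 0 (n + 1) := by
    ext r c
    simp only [hgG, Matrix.submatrix_apply, Matrix.of_apply, Fin.succAbove_zero, Fin.val_succ]
    split_ifs <;>
      first
      | rfl
      | exact (‹False›).elim
      | omega
      | (congr 1; omega)
  have hsub1 : (hgG N s (n + 2)).submatrix Fin.succ (((0 : Fin (n+1)).succ).succAbove)
      = hgG N (s + 1) (n + 1) := by
    ext r c
    have hval : ((((0 : Fin (n+1)).succ).succAbove c : Fin (n+2)) : ℕ)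
        = if (c : ℕ) < 1 then (c : ℕ) else (c : ℕ) + 1 := by
      rw [Fin.succAbove]
      split_ifs with h h' h'
      · rfl
      · exact absurd (by simpa [Fin.lt_def] using h) h'
      · exact absurd (by simpa [Fin.lt_def] using h') h
      · simp
    simp only [hgG, Matrix.submatrix_apply, Matrix.of_apply, Fin.val_succ, hval]
    split_ifs <;>
      first
      | rfl
      | exact (‹False›).elim
      | omega
      | (congr 1; omega)
  rw [h0, h1, hsub0, hsub1]
  simp only [hrest, Fin.val_succ, Fin.val_zero, mul_zero, zero_mul, mul_one,
    Finset.sum_const_zero, pow_zero, one_mul, add_zero]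
  ring



theorem hgDRec (N : ℕ) (E : ℕ → ℕ → ℚ)
    (hErec : ∀ M m : ℕ, 1 ≤ m →
      ∑ i ∈ Finset.range (m + 1),
        E M (2 * i) /
          (((2 * M + 2 * m - 2 * i).factorial : ℚ) * ((2 * i).factorial : ℚ)) = 0)
    (m : ℕ) :
    (-1 : ℚ) ^ (m + 1) * E N (2 * (m + 1)) / ((2 * (m + 1)).factorial : ℚ) =
      ∑ i ∈ Finset.range (m + 1), (-1 : ℚ) ^ i * hgC N i *
        ((-1 : ℚ) ^ (m - i) * E N (2 * (m - i)) / ((2 * (m - i)).factorial : ℚ)) := by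
  have hrec := hErec N (m + 1) (by omega)
  rw [Finset.sum_range_succ] at hrec
  have h2N : 2 * N + 2 * (m + 1) - 2 * (m + 1) = 2 * N := by omega
  rw [h2N] at hrec
  -- reflect the RHS sum
  rw [← Finset.sum_range_reflect]
  have step : ∀ j ∈ Finset.range (m + 1),
      (-1 : ℚ) ^ (m + 1 - 1 - j) * hgC N (m + 1 - 1 - j) *
        ((-1 : ℚ) ^ (m - (m + 1 - 1 - j)) * E N (2 * (m - (m + 1 - 1 - j))) /
          ((2 * (m - (m + 1 - 1 - j))).factorial : ℚ)) =
      (-1 : ℚ) ^ m * ((2 * N).factorial : ℚ) *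
        (E N (2 * j) / (((2 * N + 2 * (m + 1) - 2 * j).factorial : ℚ) * ((2 * j).factorial : ℚ))) := by
    intro j hj
    simp only [Finset.mem_range] at hj
    have hj' : j ≤ m := by omega
    have e1 : m + 1 - 1 - j = m - j := by omega
    have e2 : m - (m - j) = j := by omega
    have e3 : 2 * N + 2 * (m - j) + 2 = 2 * N + 2 * (m + 1) - 2 * j := by omega
    rw [e1, e2, hgC, e3]
    have hsign : (-1 : ℚ) ^ (m - j) * (-1 : ℚ) ^ j = (-1 : ℚ) ^ m := by
      rw [← pow_add]
      congr 1
      omega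
    field_simp
    ring_nf
    rw [← hsign]
    ring
  rw [Finset.sum_congr rfl step, ← Finset.mul_sum]
  have hsum : ∑ i ∈ Finset.range (m + 1),
      E N (2 * i) / (((2 * N + 2 * (m + 1) - 2 * i).factorial : ℚ) * ((2 * i).factorial : ℚ))
      = - (E N (2 * (m + 1)) / (((2 * N).factorial : ℚ) * ((2 * (m + 1)).factorial : ℚ))) := by
    linarith [hrec]
  rw [hsum]
  have hfacN : ((2 * N).factorial : ℚ) ≠ 0 := by positivity
  have hfacm : ((2 * (m + 1)).factorial : ℚ) ≠ 0 := by positivity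
  field_simp
  ring

theorem hypergeomEuler_det (N : ℕ) (E : ℕ → ℕ → ℚ)
    (hE0 : ∀ M : ℕ, E M 0 = 1)
    (hEodd : ∀ M m : ℕ, E M (2 * m + 1) = 0)
    (hErec : ∀ M m : ℕ, 1 ≤ m →
      ∑ i ∈ Finset.range (m + 1),
        E M (2 * i) /
          (((2 * M + 2 * m - 2 * i).factorial : ℚ) * ((2 * i).factorial : ℚ)) = 0)
    (n : ℕ) (hn : 1 ≤ n) :
    E N (2 * n) =
      (-1) ^ n * ((2 * n).factorial : ℚ) *
        Matrix.det (Matrix.of fun i j : Fin n =>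
          if (j : ℕ) ≤ (i : ℕ) then
            ((2 * N).factorial : ℚ) / ((2 * N + 2 * ((i : ℕ) - (j : ℕ)) + 2).factorial : ℚ)
          else if (j : ℕ) = (i : ℕ) + 1 then 1 else 0) := by
  set d : ℕ → ℚ := fun m => (-1 : ℚ) ^ m * E N (2 * m) / ((2 * m).factorial : ℚ) with hd
  have hd0 : d 0 = 1 := by simp [hd, hE0]
  have hdrec : ∀ m : ℕ, d (m + 1) =
      ∑ i ∈ Finset.range (m + 1), (-1 : ℚ) ^ i * hgC N i * d (m - i) :=
    fun m => hgDRec N E hErec m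
  have key : ∀ m s : ℕ, (hgG N s (m + 1)).det =
      ∑ i ∈ Finset.range (m + 1), (-1 : ℚ) ^ i * hgC N (s + i) * d (m - i) := by
    intro m
    induction m with
    | zero =>
      intro s
      rw [hgG_det_one]
      simp [hd0]
    | succ m ih =>
      intro s
      rw [hgG_det_succ]
      conv_rhs => rw [Finset.sum_range_succ']
      rw [ih 0, ih (s + 1)]
      have hL : ∑ i ∈ Finset.range (m + 1), (-1 : ℚ) ^ i * hgC N (0 + i) * d (m - i)
          = d (m + 1) := by
        rw [hdrec m]
        exact Finset.sum_congr rfl fun i _ => by rw [zero_add]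
      rw [hL]
      have hR : ∑ i ∈ Finset.range (m + 1),
          (-1 : ℚ) ^ (i + 1) * hgC N (s + (i + 1)) * d (m + 1 - (i + 1))
          = - ∑ i ∈ Finset.range (m + 1), (-1 : ℚ) ^ i * hgC N (s + 1 + i) * d (m - i) := by
        rw [← Finset.sum_neg_distrib]
        refine Finset.sum_congr rfl fun i _ => ?_
        have : s + (i + 1) = s + 1 + i := by omega
        rw [this, Nat.succ_sub_succ, pow_succ]
        ring
      rw [hR]
      simp only [pow_zero, one_mul, Nat.sub_zero, Nat.add_zero]
      ring
  obtain ⟨m, rfl⟩ : ∃ m, n = m + 1 := ⟨n - 1, by omega⟩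
  have hM : (Matrix.of fun i j : Fin (m + 1) =>
      if (j : ℕ) ≤ (i : ℕ) then
        ((2 * N).factorial : ℚ) / ((2 * N + 2 * ((i : ℕ) - (j : ℕ)) + 2).factorial : ℚ)
      else if (j : ℕ) = (i : ℕ) + 1 then 1 else 0) = hgG N 0 (m + 1) := by
    ext i j
    simp [hgG, hgC]
  rw [hM, key m 0]
  have : ∑ i ∈ Finset.range (m + 1), (-1 : ℚ) ^ i * hgC N (0 + i) * d (m - i) = d (m + 1) := by
    rw [hdrec m]
    exact Finset.sum_congr rfl fun i _ => by rw [zero_add]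
  rw [this]
  have hfac : ((2 * (m + 1)).factorial : ℚ) ≠ 0 := by positivity
  simp only [hd]
  field_simp
  ring_nf
  have h1 : ((-1 : ℚ)) ^ (m * 2) = 1 := by
    rw [mul_comm, pow_mul]
    norm_num
  rw [h1, mul_one]
end
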